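/- arXiv:2206.12698 — 2 statements merged into one kernel-verified Lean document; each statement's English description precedes it below -/
import Mathlib

section
/- Let a_-, b_-, a_+, b_+ be real numbers and k ≥ 0 be such that DET_k := 2a_+a_- + ((k+1)^2 + (k+2)^2)(a_-b_+ - a_+b_-) - 2b_-b_+(k+1)^2(k+2)^2 ≠ 0. Define a_k = 4(k+1)(a_+b_- + a_-b_+)/DET_k and b_k = (-2a_-a_+ + (k^2+(k+1)^2)(a_+b_- - a_-b_+) + 2b_-b_+ k^2(k+1)^2)/DET_k. Then the polynomial φ_k(x) = T_k(x) + a_k T_{k+1}(x) + b_k T_{k+2}(x) satisfies the Robin boundary conditions a_- φ_k(-1) + b_- φ_k'(-1) = 0 and a_+ φ_k(1) + b_+ φ_k'(1) = 0. -/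
open Polynomial Polynomial.Chebyshev

lemma T_eval_one (n : ℕ) : (Chebyshev.T ℝ n).eval 1 = 1 := by
  induction n using Nat.twoStepInduction with
  | zero => simp [Chebyshev.T_zero]
  | one => simp [Chebyshev.T_one]
  | more n ih1 ih2 =>
    have h := Chebyshev.T_add_two ℝ (n : ℤ)
    push_cast
    push_cast at ih1 ih2
    rw [h]
    simp [ih1, ih2]
    ring

lemma T_eval_neg_one (n : ℕ) : (Chebyshev.T ℝ n).eval (-1) = (-1) ^ n := by
  induction n using Nat.twoStepInduction with
  | zero => simp [Chebyshev.T_zero]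
  | one => simp [Chebyshev.T_one]
  | more n ih1 ih2 =>
    have h := Chebyshev.T_add_two ℝ (n : ℤ)
    push_cast
    push_cast at ih1 ih2
    rw [h]
    simp [ih1, ih2]
    ring

lemma U_eval_one (n : ℕ) : (Chebyshev.U ℝ n).eval 1 = n + 1 := by
  induction n using Nat.twoStepInduction with
  | zero => simp [Chebyshev.U_zero]
  | one => simp [Chebyshev.U_one]; norm_num
  | more n ih1 ih2 =>
    have h := Chebyshev.U_add_two ℝ (n : ℤ)
    push_cast
    push_cast at ih1 ih2
    rw [h]
    simp [ih1, ih2]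
    ring

lemma U_eval_neg_one (n : ℕ) : (Chebyshev.U ℝ n).eval (-1) = (-1) ^ n * (n + 1) := by
  induction n using Nat.twoStepInduction with
  | zero => simp [Chebyshev.U_zero]
  | one => simp [Chebyshev.U_one]; norm_num
  | more n ih1 ih2 =>
    have h := Chebyshev.U_add_two ℝ (n : ℤ)
    push_cast
    push_cast at ih1 ih2
    rw [h]
    simp [ih1, ih2]
    ring

lemma T_deriv_eval_one (n : ℕ) : (Polynomial.derivative (Chebyshev.T ℝ n)).eval 1 = n ^ 2 := by
  cases n with
  | zero => simp [Chebyshev.T_zero]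
  | succ m =>
    rw [Chebyshev.T_derivative_eq_U]
    have : ((m : ℤ) + 1) - 1 = (m : ℤ) := by ring
    push_cast
    rw [this]
    have := U_eval_one m
    simp [this]
    ring

lemma T_deriv_eval_neg_one (n : ℕ) :
    (Polynomial.derivative (Chebyshev.T ℝ n)).eval (-1) = (-1) ^ (n + 1) * n ^ 2 := by
  cases n with
  | zero => simp [Chebyshev.T_zero]
  | succ m =>
    rw [Chebyshev.T_derivative_eq_U]
    have : ((m : ℤ) + 1) - 1 = (m : ℤ) := by ring
    push_cast
    rw [this]
    have := U_eval_neg_one m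
    simp [this]
    ring

theorem robin_compact_basis_bc (am bm ap bp : ℝ) (k : ℕ) (DET ak bk : ℝ)
    (hDET : DET = 2 * ap * am + (((k : ℝ) + 1) ^ 2 + ((k : ℝ) + 2) ^ 2) * (am * bp - ap * bm)
      - 2 * bm * bp * ((k : ℝ) + 1) ^ 2 * ((k : ℝ) + 2) ^ 2)
    (hDET0 : DET ≠ 0)
    (hak : ak = 4 * ((k : ℝ) + 1) * (ap * bm + am * bp) / DET)
    (hbk : bk = (-(2 * am * ap) + ((k : ℝ) ^ 2 + ((k : ℝ) + 1) ^ 2) * (ap * bm - am * bp)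
      + 2 * bm * bp * (k : ℝ) ^ 2 * ((k : ℝ) + 1) ^ 2) / DET) :
    am * (Chebyshev.T ℝ k + Polynomial.C ak * Chebyshev.T ℝ (k + 1)
          + Polynomial.C bk * Chebyshev.T ℝ (k + 2)).eval (-1)
      + bm * (Polynomial.derivative (Chebyshev.T ℝ k + Polynomial.C ak * Chebyshev.T ℝ (k + 1)
          + Polynomial.C bk * Chebyshev.T ℝ (k + 2))).eval (-1) = 0 ∧
    ap * (Chebyshev.T ℝ k + Polynomial.C ak * Chebyshev.T ℝ (k + 1)
          + Polynomial.C bk * Chebyshev.T ℝ (k + 2)).eval 1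
      + bp * (Polynomial.derivative (Chebyshev.T ℝ k + Polynomial.C ak * Chebyshev.T ℝ (k + 1)
          + Polynomial.C bk * Chebyshev.T ℝ (k + 2))).eval 1 = 0 := by
  have e1 : ((k : ℤ) + 1) = ((k + 1 : ℕ) : ℤ) := by push_cast; ring
  have e2 : ((k : ℤ) + 2) = ((k + 2 : ℕ) : ℤ) := by push_cast; ring
  simp only [derivative_add, derivative_mul, derivative_C, eval_add, eval_mul, eval_C,
    zero_mul, zero_add]
  rw [e1, e2, _root_.T_eval_one, _root_.T_eval_one, _root_.T_eval_one, _root_.T_eval_neg_one, _root_.T_eval_neg_one,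
    _root_.T_eval_neg_one, _root_.T_deriv_eval_one, _root_.T_deriv_eval_one, _root_.T_deriv_eval_one,
    _root_.T_deriv_eval_neg_one, _root_.T_deriv_eval_neg_one, _root_.T_deriv_eval_neg_one]
  push_cast
  have hs : (-1 : ℝ) ^ (k + 1) = -(-1) ^ k := by ring
  have hs2 : (-1 : ℝ) ^ (k + 2) = (-1) ^ k := by ring
  have hs3 : (-1 : ℝ) ^ (k + 3) = -(-1) ^ k := by ring
  constructor
  · rw [hak, hbk, hs, hs2, hs3]
    field_simp
    rw [hDET]
    ring
  · rw [hak, hbk]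
    field_simp
    rw [hDET]
    ring
end

section
/- Let N ≥ 2 and let f = Σ_{j=0}^{N} α_j T_j satisfy f'(-1) = f'(1) = 0. Define p_j = (j-2)^2/j^2 for j ≥ 2, β_0 = α_0, β_1 = α_1, and β_j = p_j β_{j-2} + α_j for 2 ≤ j ≤ N-2. Then f = Σ_{j=0}^{N-2} β_j φ_j where φ_j = T_j - (j^2/(j+2)^2) T_{j+2}. -/
open Polynomial Polynomial.Chebyshev Finset


lemma myTwoStep {P : ℕ → Prop} (h0 : P 0) (h1 : P 1)
    (ih : ∀ n, P n → P (n+1) → P (n+2)) : ∀ n, P n := by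
  have key : ∀ n, P n ∧ P (n+1) := by
    intro n
    induction n with
    | zero => exact ⟨h0, h1⟩
    | succ k hk => exact ⟨hk.2, ih k hk.1 hk.2⟩
  exact fun n => (key n).1

lemma myT_eval_one : ∀ n : ℕ, (T ℝ (n:ℤ)).eval 1 = 1 := by
  apply myTwoStep
  · simp [T_zero]
  · simp [T_one]
  · intro n h1 h2
    push_cast at h2 ⊢
    have h2' : eval 1 (T ℝ (1 + (n:ℤ))) = 1 := by rw [add_comm]; exact h2
    rw [T_add_two]
    simp [h1, h2, h2']
    norm_num

lemma myT_eval_neg_one : ∀ n : ℕ, (T ℝ (n:ℤ)).eval (-1) = (-1)^n := by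
  apply myTwoStep
  · simp [T_zero]
  · simp [T_one]
  · intro n h1 h2
    push_cast at h2 ⊢
    have h2' : eval (-1) (T ℝ (1 + (n:ℤ))) = (-1)^(n+1) := by rw [add_comm]; exact h2
    rw [T_add_two]
    simp [h1, h2, h2']
    ring

lemma mydT_eval_one : ∀ n : ℕ, (derivative (T ℝ (n:ℤ))).eval 1 = (n:ℝ)^2 := by
  apply myTwoStep
  · simp [T_zero]
  · simp [T_one]
  · intro n h1 h2
    push_cast at h2 ⊢
    have h2' : eval 1 (derivative (T ℝ (1 + (n:ℤ)))) = ((n:ℝ)+1)^2 := by rw [add_comm]; exact h2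
    have e1 : eval 1 (T ℝ (1 + (n:ℤ))) = 1 := by
      rw [add_comm]; have := myT_eval_one (n+1); push_cast at this; exact this
    have e1' : eval 1 (T ℝ ((n:ℤ) + 1)) = 1 := by rw [← add_comm 1 (n:ℤ)]; exact e1
    rw [T_add_two]
    simp [derivative_mul, h1, h2, h2', e1, e1']
    ring

lemma mydT_eval_neg_one : ∀ n : ℕ, (derivative (T ℝ (n:ℤ))).eval (-1) = (-1)^(n+1) * (n:ℝ)^2 := by
  apply myTwoStep
  · simp [T_zero]
  · simp [T_one]
  · intro n h1 h2
    push_cast at h2 ⊢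
    have h2' : eval (-1) (derivative (T ℝ (1 + (n:ℤ)))) = (-1)^(n+1+1) * ((n:ℝ)+1)^2 := by
      rw [add_comm]; exact h2
    have e1 : eval (-1) (T ℝ (1 + (n:ℤ))) = (-1)^(n+1) := by
      rw [add_comm]; have := myT_eval_neg_one (n+1); push_cast at this ⊢; exact this
    have e1' : eval (-1) (T ℝ ((n:ℤ) + 1)) = (-1:ℝ)^(n+1) := by rw [← add_comm 1 (n:ℤ)]; exact e1
    rw [T_add_two]
    simp [derivative_mul, h1, h2, h2', e1, e1', pow_succ]
    ring

noncomputable def chebS (α : ℕ → ℝ) : ℕ → ℝ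
  | 0 => 0
  | 1 => α 1
  | (n+2) => chebS α n + ((n:ℝ)+2)^2 * α (n+2)

lemma chebS_sum (α : ℕ → ℝ) : ∀ n, chebS α n + chebS α (n+1)
    = ∑ k ∈ range (n+2), (k:ℝ)^2 * α k := by
  intro n
  induction n with
  | zero => simp [chebS, Finset.sum_range_succ]
  | succ m ih =>
      rw [Finset.sum_range_succ, ← ih, show m+1+1 = m+2 from rfl, show chebS α (m+2) = chebS α m + ((m:ℝ)+2)^2 * α (m+2) from rfl]
      push_cast
      ring
lemma chebS_alt (α : ℕ → ℝ) : ∀ n, (-1:ℝ)^n * (chebS α (n+1) - chebS α n)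
    = ∑ k ∈ range (n+2), (-1:ℝ)^(k+1) * (k:ℝ)^2 * α k := by
  intro n
  induction n with
  | zero => simp [chebS, Finset.sum_range_succ]
  | succ m ih =>
      rw [Finset.sum_range_succ, ← ih, show m+1+1 = m+2 from rfl, show chebS α (m+2) = chebS α m + ((m:ℝ)+2)^2 * α (m+2) from rfl]
      push_cast
      ring


noncomputable def chebG (β : ℕ → ℝ) : ℕ → ℝ
  | 0 => 0
  | 1 => 0
  | (j+2) => β j * ((j:ℝ)^2/((j:ℝ)+2)^2)

theorem forward_neumann_compacting (N : ℕ) (hN : 2 ≤ N) (α β : ℕ → ℝ)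
    (f : Polynomial ℝ)
    (hf : f = ∑ j ∈ Finset.range (N + 1), Polynomial.C (α j) * Chebyshev.T ℝ j)
    (hbc : (Polynomial.derivative f).eval (-1) = 0 ∧ (Polynomial.derivative f).eval 1 = 0)
    (hβ0 : β 0 = α 0) (hβ1 : β 1 = α 1)
    (hβ : ∀ j, 2 ≤ j → j ≤ N - 2 →
      β j = (((j : ℝ) - 2) ^ 2 / (j : ℝ) ^ 2) * β (j - 2) + α j) :
    f = ∑ j ∈ Finset.range (N - 1),
        Polynomial.C (β j) *
          (Chebyshev.T ℝ j - Polynomial.C ((j : ℝ) ^ 2 / ((j : ℝ) + 2) ^ 2)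
            * Chebyshev.T ℝ (j + 2)) := by
  obtain ⟨M, hNM⟩ : ∃ M, N = M + 2 := ⟨N - 2, by omega⟩
  subst hNM
  -- boundary condition sums
  have h1 : (derivative f).eval 1 = ∑ k ∈ range (M+3), (k:ℝ)^2 * α k := by
    rw [hf, derivative_sum, eval_finset_sum]
    apply Finset.sum_congr (by norm_num)
    intro j _
    rw [derivative_C_mul, eval_mul, eval_C, mydT_eval_one]
    ring
  have h2 : (derivative f).eval (-1) = ∑ k ∈ range (M+3), (-1:ℝ)^(k+1) * (k:ℝ)^2 * α k := by
    rw [hf, derivative_sum, eval_finset_sum]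
    apply Finset.sum_congr (by norm_num)
    intro j _
    rw [derivative_C_mul, eval_mul, eval_C, mydT_eval_neg_one]
    ring
  have hA : chebS α (M+1) + chebS α (M+2) = 0 := by
    rw [chebS_sum α (M+1), show M+1+2 = M+3 from rfl, ← h1, hbc.2]
  have hB : chebS α (M+2) - chebS α (M+1) = 0 := by
    have := chebS_alt α (M+1)
    rw [show M+1+2 = M+3 from rfl, show M+1+1 = M+2 from rfl, ← h2, hbc.1] at this
    rcases mul_eq_zero.mp this with h | h
    · exact absurd h (pow_ne_zero _ (by norm_num))
    · exact h
  have hS1 : chebS α (M+1) = 0 := by linarith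
  have hS2 : chebS α (M+2) = 0 := by linarith
  -- β in terms of chebS
  have hj : ∀ j, j ≤ M → (j:ℝ)^2 * β j = chebS α j := by
    apply myTwoStep (P := fun j => j ≤ M → (j:ℝ)^2 * β j = chebS α j)
    · intro _; simp [chebS]
    · intro _; simp [chebS, hβ1]
    · intro n ihn _ hle
      have hb := hβ (n+2) (by omega) (by omega)
      simp only [show n+2-2 = n from rfl] at hb
      have hn2 : ((n:ℝ)+2)^2 ≠ 0 := by positivity
      have : chebS α (n+2) = chebS α n + ((n:ℝ)+2)^2 * α (n+2) := rfl
      rw [this, ← ihn (by omega)]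
      rw [hb]
      push_cast
      field_simp
      ring
  -- coefficient identities
  have hcoef : ∀ k, k ≤ M+2 → (k:ℝ)^2 * (α k + chebG β k) = chebS α k := by
    intro k hk
    match k with
    | 0 => simp [chebG, chebS]
    | 1 => simp [chebG, chebS]
    | (j+2) =>
      have hjM : j ≤ M := by omega
      have hn2 : ((j:ℝ)+2)^2 ≠ 0 := by positivity
      have hG : chebG β (j+2) = β j * ((j:ℝ)^2/((j:ℝ)+2)^2) := rfl
      have hs : chebS α (j+2) = chebS α j + ((j:ℝ)+2)^2 * α (j+2) := rfl
      rw [hG, hs, ← hj j hjM]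
      push_cast
      field_simp
      ring
  have hmid : ∀ k, k ≤ M → α k + chebG β k = β k := by
    intro k hk
    match k with
    | 0 => simpa [chebG] using hβ0.symm
    | (j+1) =>
      have hk2 : ((j:ℝ)+1)^2 ≠ 0 := by positivity
      have e1 := hcoef (j+1) (by omega)
      have e2 := hj (j+1) hk
      push_cast at e1 e2
      have : ((j:ℝ)+1)^2 * (α (j+1) + chebG β (j+1)) = ((j:ℝ)+1)^2 * β (j+1) := by
        rw [e1, e2]
      exact mul_left_cancel₀ hk2 this
  have htop1 : α (M+1) + chebG β (M+1) = 0 := by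
    have hk2 : ((M:ℝ)+1)^2 ≠ 0 := by positivity
    have e1 := hcoef (M+1) (by omega)
    push_cast at e1
    rw [hS1] at e1
    exact by
      have := mul_eq_zero.mp e1
      rcases this with h | h
      · exact absurd h hk2
      · exact h
  have htop2 : α (M+2) + chebG β (M+2) = 0 := by
    have hk2 : ((M:ℝ)+2)^2 ≠ 0 := by positivity
    have e1 := hcoef (M+2) (by omega)
    push_cast at e1
    rw [hS2] at e1
    rcases mul_eq_zero.mp e1 with h | h
    · exact absurd h hk2
    · exact h
  -- polynomial computation
  have hexp : ∀ j : ℕ, C (β j) * (T ℝ (j:ℤ) - C ((j:ℝ)^2/((j:ℝ)+2)^2) * T ℝ ((j:ℤ)+2))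
      = C (β j) * T ℝ (j:ℤ) - C (chebG β (j+2)) * T ℝ ((j:ℤ)+2) := by
    intro j
    have : chebG β (j+2) = β j * ((j:ℝ)^2/((j:ℝ)+2)^2) := rfl
    rw [this, mul_sub, ← mul_assoc, ← Polynomial.C_mul]
  have hGsum : ∑ k ∈ range (M+3), C (chebG β k) * T ℝ (k:ℤ)
      = ∑ j ∈ range (M+1), C (chebG β (j+2)) * T ℝ ((j:ℤ)+2) := by
    rw [show M+3 = (M+2)+1 from rfl, Finset.sum_range_succ']
    rw [show M+2 = (M+1)+1 from rfl, Finset.sum_range_succ']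
    have g0 : C (chebG β 0) = 0 := by simp [chebG]
    have g1 : C (chebG β 1) = 0 := by simp [chebG]
    rw [g0, g1]
    simp only [zero_mul, add_zero]
    apply Finset.sum_congr rfl
    intro i _
    push_cast
    ring_nf
  rw [show M+2-1 = M+1 from rfl]
  rw [hf]
  have key : ∑ k ∈ range (M+3), C (α k) * T ℝ (k:ℤ) + ∑ k ∈ range (M+3), C (chebG β k) * T ℝ (k:ℤ)
      = ∑ j ∈ range (M+1), C (β j) * T ℝ (j:ℤ) := by
    rw [← Finset.sum_add_distrib]
    have : ∀ k ∈ range (M+3), C (α k) * T ℝ (k:ℤ) + C (chebG β k) * T ℝ (k:ℤ)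
        = C (α k + chebG β k) * T ℝ (k:ℤ) := by
      intro k _; rw [C_add]; ring
    rw [Finset.sum_congr rfl this]
    rw [show M+3 = (M+2)+1 from rfl, Finset.sum_range_succ]
    rw [show M+2 = (M+1)+1 from rfl, Finset.sum_range_succ]
    rw [htop1, htop2]
    simp only [map_zero, zero_mul, add_zero]
    apply Finset.sum_congr rfl
    intro k hk
    rw [hmid k (by simpa using Nat.lt_succ_iff.mp (Finset.mem_range.mp hk))]
  calc ∑ j ∈ range (M+2+1), C (α j) * T ℝ (j:ℤ)
      = ∑ j ∈ range (M+1), C (β j) * T ℝ (j:ℤ) - ∑ k ∈ range (M+3), C (chebG β k) * T ℝ (k:ℤ) := by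
        rw [← key]; ring
    _ = ∑ j ∈ range (M+1), C (β j) * T ℝ (j:ℤ) - ∑ j ∈ range (M+1), C (chebG β (j+2)) * T ℝ ((j:ℤ)+2) := by
        rw [hGsum]
    _ = ∑ j ∈ range (M+1), (C (β j) * T ℝ (j:ℤ) - C (chebG β (j+2)) * T ℝ ((j:ℤ)+2)) := by
        rw [Finset.sum_sub_distrib]
    _ = ∑ j ∈ range (M+1), C (β j) * (T ℝ (j:ℤ) - C ((j:ℝ)^2/((j:ℝ)+2)^2) * T ℝ ((j:ℤ)+2)) := by
        apply Finset.sum_congr rfl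
        intro j _
        rw [hexp]
end
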